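/- For any category C and presheaf P on C, the slice category of presheaves over P is equivalent to the category of presheaves on the category of elements of P; moreover, for each presheaf Q over P, the category of elements of the corresponding presheaf on ∫P is isomorphic to the category of elements of Q. -/

import Mathlib

open CategoryTheory

universe u

section Aux

open CategoryTheory.CategoryOfElements Opposite

variable {D D' : Type*} [Category D] [Category D']

/-- Precomposition with a functor induces a functor on categories of elements. -/
@[simps]
def elemWhisker (G : D ⥤ D') (F : D' ⥤ Type*) : (G ⋙ F).Elements ⥤ F.Elements where
  obj p := ⟨G.obj p.1, p.2⟩
  map f := ⟨G.map f.1, f.2⟩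

instance (G : D ⥤ D') (F : D' ⥤ Type*) [G.Faithful] : (elemWhisker G F).Faithful where
  map_injective {p q} f g h := by
    apply Subtype.ext
    exact G.map_injective (congrArg Subtype.val h)

instance (G : D ⥤ D') (F : D' ⥤ Type*) [G.Full] [G.Faithful] : (elemWhisker G F).Full where
  map_surjective {p q} h := by
    refine ⟨⟨G.preimage h.1, ?_⟩, ?_⟩
    · have := h.2
      erw [Functor.comp_map, Functor.map_preimage]
      exact this
    · apply Subtype.ext
      simp [elemWhisker]

instance (G : D ⥤ D') (F : D' ⥤ Type*) [G.EssSurj] : (elemWhisker G F).EssSurj where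
  mem_essImage := by
    rintro ⟨d', x⟩
    refine ⟨⟨G.objPreimage d', F.map (G.objObjPreimageIso d').inv x⟩,
      ⟨isoMk _ _ (G.objObjPreimageIso d') ?_⟩⟩
    simp [elemWhisker, ← FunctorToTypes.map_comp_apply]
    erw [← FunctorToTypes.map_comp_apply]
    simp

/-- Precomposition with an equivalence induces an equivalence on categories of elements. -/
noncomputable def elemWhiskerEquiv (G : D ⥤ D') (F : D' ⥤ Type*)
    [G.Full] [G.Faithful] [G.EssSurj] : (G ⋙ F).Elements ≌ F.Elements :=
  have : (elemWhisker G F).IsEquivalence := {}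
  (elemWhisker G F).asEquivalence

end Aux

section Main

open CategoryTheory.CategoryOfElements CategoryTheory.OverPresheafAux Opposite

variable {C : Type u} [SmallCategory C] {P : Cᵒᵖ ⥤ Type u}

/-- The functor from the elements of the restricted Yoneda presheaf of `Q` to the
elements of `Q.left`. -/
@[simps]
def restrictedElemFunctor (Q : Over P) :
    ((restrictedYoneda P).obj Q).Elements ⥤ Q.left.Elements where
  obj p := ⟨op p.1.unop.left, p.2.val⟩
  map {p q} f := ⟨f.1.unop.left.op, congrArg Subtype.val f.2⟩

instance (Q : Over P) : (restrictedElemFunctor Q).Faithful where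
  map_injective {p q} f g h := by
    apply Subtype.ext
    apply Quiver.Hom.unop_inj
    ext
    exact Quiver.Hom.op_inj (congrArg Subtype.val h)

instance (Q : Over P) : (restrictedElemFunctor Q).Full where
  map_surjective {p q} h := by
    have hw : yoneda.map h.1.unop ≫ p.1.unop.hom = q.1.unop.hom := by
      apply yonedaEquiv.injective
      erw [← yonedaEquiv_naturality]
      have hp := p.2.2.app
      have hq := q.2.2.app
      have h2 : Q.left.map h.1 p.2.1 = q.2.1 := h.2
      have nat := types_congr_hom (Q.hom.naturality h.1) p.2.1
      simp only [types_comp_apply] at nat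
      erw [← hp, ← hq, ← h2]
      exact nat.symm
    refine ⟨⟨(CostructuredArrow.homMk h.1.unop hw :
        q.1.unop ⟶ p.1.unop).op, Subtype.ext h.2⟩, rfl⟩

instance (Q : Over P) : (restrictedElemFunctor Q).EssSurj where
  mem_essImage := by
    rintro ⟨Γ, y⟩
    exact ⟨⟨op (CostructuredArrow.mk (yonedaEquiv.symm (Q.hom.app Γ y))),
      ⟨y, ⟨by simp⟩⟩⟩, ⟨Iso.refl _⟩⟩

instance (Q : Over P) : (restrictedElemFunctor Q).IsEquivalence := {}

end Main

/-- For any category `C` and presheaf `P` on `C`, the slice category of presheaves over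
`P` is equivalent to the category of presheaves on the category of elements of `P`
(equivalently, covariant functors on `P.Elements`); moreover for each presheaf `Q` over
`P`, the category of elements of the corresponding presheaf on `∫P` is isomorphic to the
category of elements of `Q`. -/
theorem over_presheaf_equiv_presheaves_on_elements
    {C : Type u} [SmallCategory C] (P : Cᵒᵖ ⥤ Type u) :
    Nonempty ((e : Over P ≌ (P.Elements ⥤ Type u)) ×'
      ∀ Q : Over P, Nonempty ((e.functor.obj Q).Elements ≌ Q.left.Elements)) := by
  classical
  let EE : (CostructuredArrow yoneda P)ᵒᵖ ≌ P.Elements :=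
    ((CategoryOfElements.costructuredArrowYonedaEquivalence P).symm.op).trans
      (opOpEquivalence P.Elements)
  let e : Over P ≌ (P.Elements ⥤ Type u) :=
    (overEquivPresheafCostructuredArrow P).trans EE.congrLeft
  refine ⟨⟨e, fun Q => ?_⟩⟩
  exact ⟨(elemWhiskerEquiv EE.inverse ((OverPresheafAux.restrictedYoneda P).obj Q)).trans
    (restrictedElemFunctor Q).asEquivalence⟩
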